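/- arXiv:1912.02090 — 3 statements merged into one kernel-verified Lean document; each statement's English description precedes it below -/
import Mathlib

section
/- Monotonicity of the Fisher information along Markov kernels in the one-dimensional case: let μ be a probability measure on X, T: X ⇝ Y a Markov kernel, and φ ∈ L²(X, μ). Then the Radon-Nikodym derivative ψ = d(T_*(φ·μ))/d(T_*μ) exists and satisfies ‖ψ‖_{L²(Y, T_*μ)} ≤ ‖φ‖_{L²(X, μ)}. -/
open MeasureTheory ProbabilityTheory

/-- Monotonicity of the Fisher metric along Markov kernels (one-dimensional case):
for a probability measure `μ` on `X`, a Markov kernel `T : X ⇝ Y` and `φ ∈ L²(X, μ)`, the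
Radon–Nikodym derivative `ψ = d(T_*(φ·μ))/d(T_*μ)` exists (i.e. `ψ` integrates over each
measurable `B ⊆ Y` against `T_*μ` to `T_*(φ·μ)(B) = ∫_X φ(x) T(x)(B) dμ(x)`), lies in
`L²(Y, T_*μ)`, and satisfies `‖ψ‖_{L²(Y,T_*μ)} ≤ ‖φ‖_{L²(X,μ)}`. -/
theorem fisher_monotonicity_kernel
    {X Y : Type*} [MeasurableSpace X] [MeasurableSpace Y]
    (μ : Measure X) [IsProbabilityMeasure μ]
    (T : Kernel X Y) [IsMarkovKernel T]
    (φ : X → ℝ) (hφ : MemLp φ 2 μ) :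
    ∃ ψ : Y → ℝ, MemLp ψ 2 (μ.bind (fun x => T x)) ∧
      (∀ B : Set Y, MeasurableSet B →
        ∫ y in B, ψ y ∂(μ.bind (fun x => T x)) = ∫ x, φ x * ((T x) B).toReal ∂μ) ∧
      eLpNorm ψ 2 (μ.bind (fun x => T x)) ≤ eLpNorm φ 2 μ := by
  classical
  have hXne : Nonempty X := by
    by_contra h
    rw [not_nonempty_iff] at h
    have h1 : μ Set.univ = 1 := measure_univ
    rw [Set.univ_eq_empty_iff.mpr h, measure_empty] at h1
    exact zero_ne_one h1
  set ν : Measure Y := μ.bind (fun x => T x) with hν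
  set π : Measure (X × Y) := μ ⊗ₘ T with hπ
  have hsnd : Measurable (Prod.snd : X × Y → Y) := measurable_snd
  have hmap : π.map Prod.snd = ν := by
    ext s hs
    rw [Measure.map_apply hsnd hs, Measure.compProd_apply (hsnd hs),
      Measure.bind_apply hs T.measurable.aemeasurable]
    rfl
  have hsndMP : MeasurePreserving Prod.snd π ν := ⟨hsnd, hmap⟩
  have hfstMP : MeasurePreserving Prod.fst π μ :=
    ⟨measurable_fst, Measure.fst_compProd μ T⟩
  have hm : (MeasurableSpace.comap (Prod.snd : X × Y → Y) inferInstance) ≤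
      Prod.instMeasurableSpace := hsnd.comap_le
  set F : X × Y → ℝ := fun p => φ p.1 with hF_def
  have hF : MemLp F 2 π := hφ.comp_measurePreserving hfstMP
  have hFnorm : eLpNorm F 2 π = eLpNorm φ 2 μ :=
    eLpNorm_comp_measurePreserving hφ.aestronglyMeasurable hfstMP
  set f : Lp ℝ 2 π := hF.toLp F with hf_def
  have hfF : f =ᵐ[π] F := hF.coeFn_toLp
  have hmeas' : AEStronglyMeasurable[MeasurableSpace.comap Prod.snd inferInstance]
      (condExpL2 ℝ ℝ hm f : X × Y → ℝ) π :=
    aestronglyMeasurable_condExpL2 hm f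
  obtain ⟨g, hg_meas, hg_eq⟩ := hmeas'
  -- g only depends on the second coordinate
  have key : ∀ (x x' : X) (y : Y), g (x, y) = g (x', y) := by
    intro x x' y
    have hs : MeasurableSet[MeasurableSpace.comap Prod.snd inferInstance]
        (g ⁻¹' {g (x, y)}) :=
      hg_meas.measurable (measurableSet_singleton _)
    obtain ⟨B, -, hB⟩ := hs
    have hxy : (x, y) ∈ Prod.snd ⁻¹' B := by rw [hB]; exact rfl
    have hx'y : (x', y) ∈ g ⁻¹' {g (x, y)} := by rw [← hB]; exact hxy
    exact (hx'y : g (x', y) = g (x, y)).symm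
  set x₀ : X := Classical.arbitrary X with hx₀
  set ψ : Y → ℝ := fun y => g (x₀, y) with hψ_def
  have hfac : ∀ p : X × Y, g p = ψ p.2 := by
    rintro ⟨x, y⟩
    exact key x x₀ y
  have hψ_meas : Measurable ψ := by
    have hmk : Measurable[_, MeasurableSpace.comap Prod.snd inferInstance]
        (fun y : Y => ((x₀ : X), y)) := by
      rw [measurable_iff_comap_le, MeasurableSpace.comap_comp]
      have : (Prod.snd ∘ fun y : Y => ((x₀ : X), y)) = id := rfl
      rw [this, MeasurableSpace.comap_id]
    exact hg_meas.measurable.comp hmk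
  have hψae : AEStronglyMeasurable ψ ν := hψ_meas.aestronglyMeasurable
  have hψ_snd_eq : (fun p : X × Y => ψ p.2) =ᵐ[π] (condExpL2 ℝ ℝ hm f : X × Y → ℝ) := by
    refine hg_eq.symm.mono fun p hp => ?_
    show ψ p.2 = _
    rw [← hfac p]
    exact hp
  have hψν : eLpNorm ψ 2 ν = eLpNorm (condExpL2 ℝ ℝ hm f : X × Y → ℝ) 2 π := by
    rw [← eLpNorm_comp_measurePreserving hψae hsndMP]
    exact eLpNorm_congr_ae hψ_snd_eq
  have hbound : eLpNorm ψ 2 ν ≤ eLpNorm φ 2 μ := by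
    rw [hψν, ← hFnorm, ← eLpNorm_congr_ae hfF]
    exact eLpNorm_condExpL2_le hm f
  refine ⟨ψ, ⟨hψae, ?_⟩, ?_, hbound⟩
  · rw [hψν]
    exact (Lp.eLpNorm_lt_top _)
  · intro B hB
    have hBm : MeasurableSet[MeasurableSpace.comap (Prod.snd : X × Y → Y) inferInstance]
        ((Prod.snd : X × Y → Y) ⁻¹' B) := ⟨B, hB, rfl⟩
    have h1 : ∫ y in B, ψ y ∂ν = ∫ p in Prod.snd ⁻¹' B, ψ p.2 ∂π := by
      rw [← hmap, setIntegral_map hB (by rw [hmap]; exact hψae) hsnd.aemeasurable]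
    have h2 : ∫ p in Prod.snd ⁻¹' B, ψ p.2 ∂π
        = ∫ p in Prod.snd ⁻¹' B, (condExpL2 ℝ ℝ hm f : X × Y → ℝ) p ∂π :=
      integral_congr_ae (ae_restrict_of_ae hψ_snd_eq)
    have h3 : ∫ p in Prod.snd ⁻¹' B, (condExpL2 ℝ ℝ hm f : X × Y → ℝ) p ∂π
        = ∫ p in Prod.snd ⁻¹' B, f p ∂π :=
      integral_condExpL2_eq hm f hBm (measure_ne_top _ _)
    have h4 : ∫ p in Prod.snd ⁻¹' B, f p ∂π = ∫ p in Prod.snd ⁻¹' B, F p ∂π :=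
      integral_congr_ae (ae_restrict_of_ae hfF)
    have hpre : (Prod.snd ⁻¹' B : Set (X × Y)) = Set.univ ×ˢ B := by
      ext p; simp
    have h5 : ∫ p in Prod.snd ⁻¹' B, F p ∂π = ∫ x, φ x * ((T x) B).toReal ∂μ := by
      rw [hpre, hπ, Measure.setIntegral_compProd MeasurableSet.univ hB
        ((hF.integrable one_le_two).integrableOn)]
      rw [Measure.restrict_univ]
      congr 1
      ext x
      simp only [hF_def]
      rw [setIntegral_const, smul_eq_mul, mul_comm]
      rfl
    rw [h1, h2, h3, h4, h5]
end

section
/- Fisher-Neyman factorization gives sufficiency: let μ be a probability measure on X admitting a regular conditional distribution p: Y → P(X) with respect to a measurable map κ: X → Y, and let {ν_θ} be a family of probability measures with ν_θ = (h_θ ∘ κ)·μ for measurable functions h_θ: Y → ℝ≥0. Then for each θ and each measurable A ⊆ X, d(κ_*(1_A·ν_θ))/d(κ_*ν_θ)(y) = p_y(A) for κ_*ν_θ-almost every y; in particular this derivative is independent of θ, so κ is sufficient for the family {ν_θ}. -/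
open MeasureTheory

/-- Fisher–Neyman factorization gives sufficiency: let `μ` be a probability
measure on `X` with a regular conditional distribution `p : Y → P(X)` w.r.t. a measurable
`κ : X → Y` (i.e. `μ(A ∩ κ⁻¹ B) = ∫_B p_y(A) d(κ_*μ)` for all measurable `A`, `B`), and let
`ν_θ = (h_θ ∘ κ)·μ` be a family of probability measures with densities factoring through `κ`.
Then `d(κ_*(1_A·ν_θ))/d(κ_*ν_θ)(y) = p_y(A)` for `κ_*ν_θ`-a.e. `y`, i.e.
`κ_*(1_A·ν_θ)(B) = ∫_B p_y(A) d(κ_*ν_θ)` for all measurable `B`; in particular the derivative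
is independent of `θ`, so `κ` is sufficient for the family. -/
theorem fisher_neyman_sufficiency
    {X Y : Type*} [MeasurableSpace X] [MeasurableSpace Y] {Θ : Type*}
    (κ : X → Y) (hκ : Measurable κ)
    (μ : Measure X) [IsProbabilityMeasure μ]
    (p : Y → Measure X) (hp : Measurable p) (hprob : ∀ y, IsProbabilityMeasure (p y))
    (hcond : ∀ A : Set X, MeasurableSet A → ∀ B : Set Y, MeasurableSet B →
      μ (A ∩ κ ⁻¹' B) = ∫⁻ y in B, (p y) A ∂(μ.map κ))
    (h : Θ → Y → ENNReal) (hh : ∀ θ, Measurable (h θ))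
    (ν : Θ → Measure X) (hν : ∀ θ, ν θ = μ.withDensity (fun x => h θ (κ x)))
    (hνprob : ∀ θ, IsProbabilityMeasure (ν θ)) :
    ∀ θ, ∀ A : Set X, MeasurableSet A → ∀ B : Set Y, MeasurableSet B →
      ((ν θ).restrict A).map κ B = ∫⁻ y in B, (p y) A ∂((ν θ).map κ) := by
  intro θ A hA B hB
  have hpA : Measurable (fun y => p y A) := (Measure.measurable_coe hA).comp hp
  -- rewrite hcond as a measure equality
  have hm : (μ.restrict A).map κ = (μ.map κ).withDensity (fun y => p y A) := by
    ext C hC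
    rw [Measure.map_apply hκ hC, Measure.restrict_apply (hκ hC),
      withDensity_apply _ hC, Set.inter_comm]
    exact hcond A hA C hC
  have hνmap : (ν θ).map κ = (μ.map κ).withDensity (h θ) := by
    ext C hC
    rw [Measure.map_apply hκ hC, hν, withDensity_apply _ (hκ hC),
      withDensity_apply _ hC, ← setLIntegral_map hC (hh θ) hκ]
  have hLHS : ((ν θ).restrict A).map κ B
      = ∫⁻ y in B, (p y A) * h θ y ∂(μ.map κ) := by
    rw [Measure.map_apply hκ hB, Measure.restrict_apply (hκ hB), hν,
      withDensity_apply _ ((hκ hB).inter hA)]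
    have : κ ⁻¹' B ∩ A = (fun x => x) ⁻¹' (κ ⁻¹' B) ∩ A := rfl
    rw [show (κ ⁻¹' B ∩ A) = κ ⁻¹' B ∩ A from rfl, ← Measure.restrict_restrict (hκ hB)]
    rw [show ∫⁻ x in κ ⁻¹' B, h θ (κ x) ∂μ.restrict A
        = ∫⁻ y in B, h θ y ∂((μ.restrict A).map κ) from
      (setLIntegral_map hB (hh θ) hκ).symm, hm,
      setLIntegral_withDensity_eq_setLIntegral_mul _ hpA (hh θ) hB]
    rfl
  rw [hLHS, hνmap, setLIntegral_withDensity_eq_setLIntegral_mul _ (hh θ) hpA hB]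
  exact setLIntegral_congr_fun hB (fun y _ => mul_comm _ _)
end

section
/- If T: X ⇝ Y is a Markov kernel sufficient for a family P of probability measures on X (i.e., there is a Markov kernel p: Y ⇝ X with p^*(h) = d T_*(h·μ)/d T_*(μ) for all bounded measurable h and all μ ∈ P), then p_*(T_*(μ)) = μ for every μ ∈ P. -/
open MeasureTheory ProbabilityTheory

/-- If the Markov kernel `T : X ⇝ Y` is sufficient for a family `P` of
probability measures on `X`, witnessed by a Markov kernel `p : Y ⇝ X` with
`T_*(h·μ) = p^*(h) · T_*(μ)` for all (bounded) measurable densities `h` and all `μ ∈ P`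
(where `p^*(h)(y) = ∫ h d(p y)`), then `p_*(T_*(μ)) = μ` for every `μ ∈ P`. -/
theorem sufficient_kernel_recovers
    {X Y : Type*} [MeasurableSpace X] [MeasurableSpace Y]
    (T : Kernel X Y) [IsMarkovKernel T] (p : Kernel Y X) [IsMarkovKernel p]
    (P : Set (Measure X)) (hP : ∀ μ ∈ P, IsProbabilityMeasure μ)
    (hsuff : ∀ μ ∈ P, ∀ h : X → ENNReal, Measurable h →
      (μ.withDensity h).bind (fun x => T x)
        = (μ.bind (fun x => T x)).withDensity (fun y => ∫⁻ x, h x ∂(p y))) :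
    ∀ μ ∈ P, (μ.bind (fun x => T x)).bind (fun y => p y) = μ := by
  intro μ hμ
  haveI := hP μ hμ
  ext s hs
  have key := hsuff μ hμ (s.indicator 1) (measurable_one.indicator hs)
  have h1 : ((μ.withDensity (s.indicator 1)).bind (fun x => T x)) Set.univ = μ s := by
    rw [Measure.bind_apply MeasurableSet.univ T.measurable.aemeasurable]
    simp only [measure_univ, lintegral_one]
    rw [withDensity_apply _ MeasurableSet.univ, Measure.restrict_univ,
      lintegral_indicator_one hs]
  have h2 : ((μ.bind (fun x => T x)).withDensity
      (fun y => ∫⁻ x, s.indicator 1 x ∂(p y))) Set.univ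
      = ((μ.bind (fun x => T x)).bind (fun y => p y)) s := by
    rw [withDensity_apply _ MeasurableSet.univ, Measure.restrict_univ,
      Measure.bind_apply hs p.measurable.aemeasurable]
    simp only [lintegral_indicator_one hs]
  rw [← h2, ← key, h1]
end
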